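/- Let W be a finite-dimensional complex vector space and let V be a finite-dimensional linear subspace of Sym(W) spanned by homogeneous elements of positive degree. Then there exists r₀ such that for all r ≥ r₀ the ℂ-algebra homomorphism i_r : Sym(V) → Sym(W)^{⊗r} is injective. -/

import Mathlib

open MvPolynomial


private lemma coeff_pderiv' {σ : Type*} (g : MvPolynomial σ ℂ) (j : σ) (u : σ →₀ ℕ) :
    coeff u (pderiv j g) = ((u j : ℂ) + 1) * coeff (u + Finsupp.single j 1) g := by
  classical
  induction g using MvPolynomial.induction_on' with
  | add p q hp hq => simp [map_add, coeff_add, hp, hq, mul_add]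
  | monomial s a =>
    rw [pderiv_monomial, coeff_monomial, coeff_monomial]
    by_cases hsj : s j = 0
    · have h1 : s - Finsupp.single j 1 = s := by
        ext k
        rcases eq_or_ne k j with rfl | hk
        · simp [Finsupp.tsub_apply, hsj]
        · simp [Finsupp.tsub_apply, Finsupp.single_apply, Ne.symm hk]
      have h2 : s ≠ u + Finsupp.single j 1 := by
        intro h
        apply_fun (fun m => m j) at h
        simp [Finsupp.add_apply, Finsupp.single_apply] at h
        omega
      rw [h1, if_neg h2, mul_zero]
      split <;> simp [hsj]
    · have hle : Finsupp.single j 1 ≤ s :=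
        Finsupp.single_le_iff.mpr (Nat.one_le_iff_ne_zero.mpr hsj)
      have hiff : (s - Finsupp.single j 1 = u) ↔ (s = u + Finsupp.single j 1) :=
        tsub_eq_iff_eq_add_of_le hle
      by_cases he : s = u + Finsupp.single j 1
      · rw [if_pos (hiff.mpr he), if_pos he]
        have : s j = u j + 1 := by
          rw [he]; simp [Finsupp.add_apply, Finsupp.single_apply]
        rw [this]
        push_cast
        ring
      · rw [if_neg (fun h => he (hiff.mp h)), if_neg he, mul_zero]

private lemma support_eq_zero_of_pderiv {σ : Type*} (g : MvPolynomial σ ℂ)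
    (h : ∀ j, pderiv j g = 0) : ∀ m ∈ g.support, m = 0 := by
  intro m hm
  by_contra hm0
  obtain ⟨j, hj⟩ : ∃ j, m j ≠ 0 := by
    by_contra hc; push_neg at hc; exact hm0 (Finsupp.ext hc)
  have hle : Finsupp.single j 1 ≤ m :=
    Finsupp.single_le_iff.mpr (Nat.one_le_iff_ne_zero.mpr hj)
  have := coeff_pderiv' g j (m - Finsupp.single j 1)
  rw [h j, tsub_add_cancel_of_le hle] at this
  have e1 : ((m - Finsupp.single j 1 : σ →₀ ℕ)) j = m j - 1 := by
    simp [Finsupp.tsub_apply]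
  rw [e1] at this
  have e2 : ((m j - 1 : ℕ) : ℂ) + 1 = ((m j : ℕ) : ℂ) := by
    have : (m j - 1) + 1 = m j := Nat.succ_pred_eq_of_pos (Nat.pos_of_ne_zero hj)
    exact_mod_cast congrArg (Nat.cast : ℕ → ℂ) this
  rw [e2] at this
  have : coeff m g = 0 := by
    have hmj : ((m j : ℕ) : ℂ) ≠ 0 := Nat.cast_ne_zero.mpr hj
    field_simp at this
    rw [coeff_zero] at this
    exact (mul_eq_zero.mp this.symm).resolve_left hmj
  exact (MvPolynomial.mem_support_iff.mp hm) this

private lemma totalDegree_pderiv_lt {σ : Type*} (P : MvPolynomial σ ℂ)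
    (h : P.totalDegree ≠ 0) (j : σ) : (pderiv j P).totalDegree < P.totalDegree := by
  classical
  rw [MvPolynomial.totalDegree]
  rw [Finset.sup_lt_iff (by exact Nat.pos_of_ne_zero h)]
  intro d hd
  have hc : coeff (d + Finsupp.single j 1) P ≠ 0 := by
    intro h0
    have := coeff_pderiv' P j d
    rw [h0, mul_zero] at this
    exact (MvPolynomial.mem_support_iff.mp hd) this
  have hle := MvPolynomial.le_totalDegree (MvPolynomial.mem_support_iff.mpr hc)
  have hsum : ((d + Finsupp.single j 1).sum fun _ e => e) = (d.sum fun _ e => e) + 1 := by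
    rw [Finsupp.sum_add_index' (fun _ => rfl) (fun _ _ _ => rfl)]
    simp [Finsupp.sum_single_index]
  omega


private lemma exists_eval_ne {σ : Type*} (R : MvPolynomial σ ℂ) (h : R ≠ 0) :
    ∃ w : σ → ℂ, eval w R ≠ 0 := by
  by_contra hc
  push_neg at hc
  exact h (MvPolynomial.funext fun w => by rw [hc w, map_zero])

private lemma pderiv_rename_ne {σ τ : Type*} (f : σ → τ) (g : MvPolynomial σ ℂ) {x : τ}
    (hx : ∀ i, f i ≠ x) : pderiv x (rename f g) = 0 := by
  classical
  apply pderiv_eq_zero_of_notMem_vars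
  intro hmem
  obtain ⟨i, _, hi⟩ := mem_vars_rename f g hmem
  exact hx i hi

private lemma pderiv_sum_rename {N r : ℕ} (f : MvPolynomial (Fin N) ℂ) (x : Fin r × Fin N) :
    pderiv x (∑ s : Fin r, rename (Prod.mk s) f)
      = rename (Prod.mk x.1) (pderiv x.2 f) := by
  rw [map_sum, Finset.sum_eq_single x.1]
  · have hinj : Function.Injective (Prod.mk x.1 : Fin N → Fin r × Fin N) := by
      intro a b h; simpa using h
    have := pderiv_rename (R := ℂ) hinj x.2 f
    simpa using this
  · intro s _ hs
    exact pderiv_rename_ne _ _ (fun i h => hs (congrArg Prod.fst h))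
  · intro h; simp at h

private lemma aeval_aeval' {σ τ : Type*} {A : Type*} [CommRing A] [Algebra ℂ A]
    (g : τ → A) (g' : σ → MvPolynomial τ ℂ) (Q : MvPolynomial σ ℂ) :
    aeval g (aeval g' Q) = aeval (fun x => aeval g (g' x)) Q := by
  induction Q using MvPolynomial.induction_on with
  | C a => simp only [MvPolynomial.aeval_C]; simp
  | add p q hp hq => simp only [map_add, hp, hq]
  | mul_X p v hp => simp only [map_mul, MvPolynomial.aeval_X, hp]

private lemma aeval_eq_eval' {σ : Type*} (w : σ → ℂ) (Q : MvPolynomial σ ℂ) :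
    aeval w Q = eval w Q := rfl

private lemma pderiv_aeval_sum {κ : ℕ} {τ : Type*} (F : Fin κ → MvPolynomial τ ℂ) (x : τ)
    (P : MvPolynomial (Fin κ) ℂ) :
    pderiv x (aeval F P)
      = ∑ v, aeval F (pderiv v P) * pderiv x (F v) := by
  classical
  induction P using MvPolynomial.induction_on with
  | C a => simp [MvPolynomial.algebraMap_eq]
  | add p q hp hq =>
    simp only [map_add, hp, hq, add_mul, ← Finset.sum_add_distrib]
  | mul_X p v hp =>
    rw [map_mul, MvPolynomial.aeval_X, pderiv_mul, hp, Finset.sum_mul]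
    have key : ∀ w : Fin κ, w ∈ Finset.univ →
        aeval F (pderiv w (p * X v)) * pderiv x (F w)
        = aeval F (pderiv w p) * pderiv x (F w) * F v
          + (if w = v then aeval F p * pderiv x (F v) else 0) := by
      intro w _
      rw [pderiv_mul, map_add, map_mul, MvPolynomial.aeval_X]
      rcases eq_or_ne w v with rfl | hw
      · rw [pderiv_X_self, if_pos rfl]; simp; ring
      · rw [pderiv_X_of_ne (Ne.symm hw), if_neg hw]; simp; ring
    rw [Finset.sum_congr rfl key, Finset.sum_add_distrib, Finset.sum_ite_eq' Finset.univ v]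
    simp only [Finset.mem_univ, if_true]


private noncomputable def constrSpace {N κ : ℕ} (f : Fin κ → MvPolynomial (Fin N) ℂ)
    (q : Fin N → ℂ) : Submodule ℂ (Fin κ → ℂ) :=
  ⨅ j : Fin N, LinearMap.ker
    (∑ v, eval q (pderiv j (f v)) • (LinearMap.proj v : (Fin κ → ℂ) →ₗ[ℂ] ℂ))

private lemma mem_constrSpace_iff {N κ : ℕ} (f : Fin κ → MvPolynomial (Fin N) ℂ)
    (q : Fin N → ℂ) (c : Fin κ → ℂ) :
    c ∈ constrSpace f q ↔
      ∀ j, ∑ v, eval q (pderiv j (f v)) * c v = 0 := by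
  simp [constrSpace, Submodule.mem_iInf, LinearMap.mem_ker, LinearMap.sum_apply,
    LinearMap.smul_apply, LinearMap.proj_apply, smul_eq_mul]

private lemma eval_pderiv_comb {N κ : ℕ} (f : Fin κ → MvPolynomial (Fin N) ℂ)
    (q : Fin N → ℂ) (c : Fin κ → ℂ) (j : Fin N) :
    eval q (pderiv j (∑ v, c v • f v)) = ∑ v, eval q (pderiv j (f v)) * c v := by
  rw [map_sum, map_sum]
  refine Finset.sum_congr rfl fun v _ => ?_
  rw [Derivation.map_smul, smul_eq_C_mul, map_mul, eval_C]
  ring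

private lemma exists_point_subst {N r : ℕ} (Q : MvPolynomial (Fin r × Fin N) ℂ) (hQ : Q ≠ 0)
    (t : Fin r) (h : MvPolynomial (Fin N) ℂ) (hh : h ≠ 0) :
    ∃ q : Fin N → ℂ, eval q h ≠ 0 ∧
      aeval (fun x : Fin r × Fin N =>
        if x.1 = t then MvPolynomial.C (q x.2) else MvPolynomial.X x) Q ≠ 0 := by
  classical
  by_contra hcon
  push_neg at hcon
  have hz : ∀ w : Fin r × Fin N → ℂ, eval w (rename (Prod.mk t) h * Q) = 0 := by
    intro w
    rw [map_mul, eval_rename]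
    by_cases hq : eval (w ∘ Prod.mk t) h = 0
    · rw [hq, zero_mul]
    · have hE := hcon (w ∘ Prod.mk t) hq
      have key : eval w Q = eval w (aeval (fun x : Fin r × Fin N =>
          if x.1 = t then MvPolynomial.C ((w ∘ Prod.mk t) x.2) else MvPolynomial.X x) Q) := by
        rw [← aeval_eq_eval', ← aeval_eq_eval', aeval_aeval']
        have hfun : (fun x : Fin r × Fin N => aeval w
            (if x.1 = t then (MvPolynomial.C ((w ∘ Prod.mk t) x.2) :
              MvPolynomial (Fin r × Fin N) ℂ) else MvPolynomial.X x)) = w := by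
          funext x
          rcases x with ⟨x1, x2⟩
          by_cases hx : x1 = t
          · subst hx; simp
          · simp [hx]
        rw [hfun]
      rw [key, hE, map_zero, mul_zero]
  have : rename (Prod.mk t) h * Q = 0 :=
    MvPolynomial.funext fun w => by rw [hz w, map_zero]
  rcases mul_eq_zero.mp this with h1 | h2
  · have hinj : Function.Injective (Prod.mk t : Fin N → Fin r × Fin N) := by
      intro a b hab; simpa using hab
    exact hh (rename_injective _ hinj (by rw [h1, map_zero]))
  · exact hQ h2


private lemma main_induction {N κ r : ℕ} (hκr : κ ≤ r) (f : Fin κ → MvPolynomial (Fin N) ℂ)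
    (Hf : ∀ c : Fin κ → ℂ, c ≠ 0 → ∃ j, pderiv j (∑ v, c v • f v) ≠ 0)
    (Q : MvPolynomial (Fin r × Fin N) ℂ) (hQ : Q ≠ 0) :
    ∃ w : Fin r × Fin N → ℂ, eval w Q ≠ 0 ∧
      ∀ c : Fin κ → ℂ, (∀ (s : Fin r) (j : Fin N),
        ∑ v, eval (fun i => w (s, i)) (pderiv j (f v)) * c v = 0) → c = 0 := by
  classical
  have claim : ∀ k : ℕ, k ≤ κ → ∃ p : Fin k → Fin N → ℂ,
      (aeval (fun x : Fin r × Fin N =>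
        if h : (x.1 : ℕ) < k then MvPolynomial.C (p ⟨(x.1 : ℕ), h⟩ x.2)
        else MvPolynomial.X x) Q ≠ 0) ∧
      Module.finrank ℂ ↥(⨅ s : Fin k, constrSpace f (p s)) ≤ κ - k := by
    intro k
    induction k with
    | zero =>
      intro _
      refine ⟨fun _ _ => 0, ?_, ?_⟩
      · have hfun : (fun x : Fin r × Fin N =>
            if h : (x.1 : ℕ) < 0 then
              (MvPolynomial.C ((fun (_ : Fin 0) (_ : Fin N) => (0:ℂ)) ⟨(x.1 : ℕ), h⟩ x.2) :
                MvPolynomial (Fin r × Fin N) ℂ)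
            else MvPolynomial.X x) = MvPolynomial.X := by
          funext x; rw [dif_neg (Nat.not_lt_zero _)]
        rw [hfun, aeval_X_left_apply]
        exact hQ
      · have hinf : (⨅ s : Fin 0, constrSpace f ((fun _ _ => (0:ℂ)) s)) = ⊤ :=
          iInf_of_empty _
        rw [hinf, Nat.sub_zero]
        rw [finrank_top]
        simp [Module.finrank_fin_fun]
    | succ k IH =>
      intro hk1
      obtain ⟨p, hσQ, hrank⟩ := IH (le_trans (Nat.le_succ k) hk1)
      set t : Fin r := ⟨k, lt_of_lt_of_le hk1 hκr⟩ with ht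
      set Ck : Submodule ℂ (Fin κ → ℂ) := ⨅ s : Fin k, constrSpace f (p s) with hCk
      -- the substitution-composition identity
      have subst_step : ∀ q : Fin N → ℂ,
          (aeval (fun x : Fin r × Fin N =>
            if h : (x.1 : ℕ) < k + 1 then
              MvPolynomial.C ((fun i : Fin (k+1) =>
                if h' : (i : ℕ) < k then p ⟨(i : ℕ), h'⟩ else q) ⟨(x.1 : ℕ), h⟩ x.2)
            else MvPolynomial.X x) Q)
          = aeval (fun x : Fin r × Fin N =>
              if x.1 = t then MvPolynomial.C (q x.2) else MvPolynomial.X x)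
            (aeval (fun x : Fin r × Fin N =>
              if h : (x.1 : ℕ) < k then MvPolynomial.C (p ⟨(x.1 : ℕ), h⟩ x.2)
              else MvPolynomial.X x) Q) := by
        intro q
        rw [aeval_aeval']
        refine congrArg (fun gg : (Fin r × Fin N) → MvPolynomial (Fin r × Fin N) ℂ =>
          aeval gg Q) ?_
        funext x
        by_cases h1 : (x.1 : ℕ) < k
        · rw [dif_pos h1, dif_pos (Nat.lt_succ_of_lt h1)]
          simp [h1]
        · by_cases h2 : (x.1 : ℕ) = k
          · rw [dif_neg h1, dif_pos (by omega : (x.1 : ℕ) < k + 1)]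
            have hxt : x.1 = t := Fin.ext (by rw [h2, ht])
            simp [hxt, h1, h2, ht]
          · rw [dif_neg h1, dif_neg (by omega : ¬ (x.1 : ℕ) < k + 1)]
            have hxt : x.1 ≠ t := fun hh => h2 (by rw [hh, ht])
            simp [hxt]
      -- choose the polynomial h according to whether Ck is already trivial
      by_cases hbot : Ck = ⊥
      · obtain ⟨q, -, hqE⟩ := exists_point_subst _ hσQ t
          (1 : MvPolynomial (Fin N) ℂ) one_ne_zero
        refine ⟨fun i : Fin (k+1) => if h' : (i : ℕ) < k then p ⟨(i : ℕ), h'⟩ else q,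
          ?_, ?_⟩
        · rw [subst_step q]; exact hqE
        · have hle : (⨅ s : Fin (k+1), constrSpace f
              ((fun i : Fin (k+1) => if h' : (i : ℕ) < k then p ⟨(i : ℕ), h'⟩ else q) s)) ≤ Ck := by
            rw [hCk]
            refine le_iInf fun s => iInf_le_of_le (Fin.castSucc s) (le_of_eq ?_)
            congr 1
            simp [s.isLt]
          have hb : (⨅ s : Fin (k+1), constrSpace f
              ((fun i : Fin (k+1) => if h' : (i : ℕ) < k then p ⟨(i : ℕ), h'⟩ else q) s)) = ⊥ :=
            le_bot_iff.mp (le_trans hle (le_of_eq hbot))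
          rw [hb]
          simp
      · obtain ⟨c₀, hc₀mem, hc₀⟩ := (Submodule.ne_bot_iff _).mp hbot
        obtain ⟨j₀, hj₀⟩ := Hf c₀ hc₀
        obtain ⟨q, hqh, hqE⟩ := exists_point_subst _ hσQ t
          (pderiv j₀ (∑ v, c₀ v • f v)) hj₀
        refine ⟨fun i : Fin (k+1) => if h' : (i : ℕ) < k then p ⟨(i : ℕ), h'⟩ else q,
          ?_, ?_⟩
        · rw [subst_step q]; exact hqE
        · have hle : (⨅ s : Fin (k+1), constrSpace f
              ((fun i : Fin (k+1) => if h' : (i : ℕ) < k then p ⟨(i : ℕ), h'⟩ else q) s))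
              ≤ Ck ⊓ constrSpace f q := by
            refine le_inf ?_ ?_
            · rw [hCk]
              refine le_iInf fun s => iInf_le_of_le (Fin.castSucc s) (le_of_eq ?_)
              congr 1
              simp [s.isLt]
            · refine iInf_le_of_le (Fin.last k) (le_of_eq ?_)
              congr 1
              simp
          have hlt : Ck ⊓ constrSpace f q < Ck := by
            refine lt_of_le_of_ne inf_le_left fun heq => ?_
            have hmem : c₀ ∈ constrSpace f q := by
              have := hc₀mem
              rw [← heq] at this
              exact this.2
            have hval := (mem_constrSpace_iff f q c₀).mp hmem j₀
            rw [← eval_pderiv_comb] at hval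
            exact hqh hval
          have h1 : Module.finrank ℂ ↥(Ck ⊓ constrSpace f q) < Module.finrank ℂ ↥Ck :=
            Submodule.finrank_lt_finrank_of_lt hlt
          have h2 := Submodule.finrank_mono hle
          omega
  obtain ⟨p, hσQ, hrank⟩ := claim κ le_rfl
  have hbotinf : (⨅ s : Fin κ, constrSpace f (p s)) = ⊥ := by
    have : Module.finrank ℂ ↥(⨅ s : Fin κ, constrSpace f (p s)) = 0 := by omega
    exact Submodule.finrank_eq_zero.mp this
  obtain ⟨w₀, hw₀⟩ := exists_eval_ne _ hσQ
  refine ⟨fun x => if h : (x.1 : ℕ) < κ then p ⟨(x.1 : ℕ), h⟩ x.2 else w₀ x, ?_, ?_⟩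
  · have key : eval w₀ (aeval (fun x : Fin r × Fin N =>
        if h : (x.1 : ℕ) < κ then MvPolynomial.C (p ⟨(x.1 : ℕ), h⟩ x.2)
        else MvPolynomial.X x) Q)
        = eval (fun x : Fin r × Fin N =>
            if h : (x.1 : ℕ) < κ then p ⟨(x.1 : ℕ), h⟩ x.2 else w₀ x) Q := by
      rw [← aeval_eq_eval', ← aeval_eq_eval', aeval_aeval']
      refine congrArg (fun gg : (Fin r × Fin N) → ℂ => aeval gg Q) ?_
      funext x
      by_cases h1 : (x.1 : ℕ) < κ
      · rw [dif_pos h1]; simp [h1]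
      · rw [dif_neg h1]; simp [h1]
    rw [← key]
    exact hw₀
  · intro c hc
    have hmem : c ∈ ⨅ s : Fin κ, constrSpace f (p s) := by
      rw [Submodule.mem_iInf]
      intro s
      rw [mem_constrSpace_iff]
      intro j
      have hcs := hc ⟨(s : ℕ), lt_of_lt_of_le s.isLt hκr⟩ j
      have hw : (fun i => (fun x : Fin r × Fin N =>
          if h : (x.1 : ℕ) < κ then p ⟨(x.1 : ℕ), h⟩ x.2 else w₀ x)
            ((⟨(s : ℕ), lt_of_lt_of_le s.isLt hκr⟩ : Fin r), i)) = p s := by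
        funext i
        simp [s.isLt]
      rw [← hw]
      exact hcs
    rw [hbotinf] at hmem
    exact (Submodule.mem_bot ℂ).mp hmem



/-- Concrete model of the map `i_r : Sym(V) → Sym(W)^{⊗r}`.  Here `Sym(W)` for `W = ℂ^N` is
modelled by the polynomial ring `ℂ[y_1, …, y_N]`, the subspace `V ⊆ Sym(W)` is given together
with a basis `b : Fin κ → V`, `Sym(V)` is modelled by the polynomial ring `ℂ[z_1, …, z_κ]`
(via the basis `b`), and `Sym(W)^{⊗r}` is modelled by the polynomial ring in `r` disjoint
copies of the variables, the `s`-th factor inclusion being the renaming `y_j ↦ y_{(s,j)}`.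
The map `i_r` sends the basis vector `z_v` of `V` to `∑_{s=1}^r 1 ⊗ ⋯ ⊗ b v ⊗ ⋯ ⊗ 1`. -/
noncomputable def iMap (N κ r : ℕ) (V : Submodule ℂ (MvPolynomial (Fin N) ℂ))
    (b : Module.Basis (Fin κ) ℂ V) :
    MvPolynomial (Fin κ) ℂ →ₐ[ℂ] MvPolynomial (Fin r × Fin N) ℂ :=
  MvPolynomial.aeval fun v : Fin κ =>
    ∑ s : Fin r, MvPolynomial.rename (Prod.mk s) ((b v : MvPolynomial (Fin N) ℂ))

/-- If `V` is a finite-dimensional subspace of `Sym(W)` spanned by homogeneous elements of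
positive degree, then for all sufficiently large `r` the map `i_r : Sym(V) → Sym(W)^{⊗r}`
is injective. -/
theorem iMap_injective_for_large_r (N κ : ℕ) (V : Submodule ℂ (MvPolynomial (Fin N) ℂ))
    (b : Module.Basis (Fin κ) ℂ V)
    (hV : ∃ S : Set (MvPolynomial (Fin N) ℂ), V = Submodule.span ℂ S ∧
      ∀ f ∈ S, ∃ d : ℕ, 1 ≤ d ∧ f ∈ MvPolynomial.homogeneousSubmodule (Fin N) ℂ d) :
    ∃ r₀ : ℕ, ∀ r : ℕ, r₀ ≤ r → Function.Injective (iMap N κ r V b) := by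
  classical
  obtain ⟨S, hspan, hhom⟩ := hV
  -- every element of V has zero constant coefficient
  have hcc : ∀ x ∈ V, coeff 0 x = 0 := by
    intro x hx
    rw [hspan] at hx
    induction hx using Submodule.span_induction with
    | mem y hy =>
      obtain ⟨d, hd1, hdh⟩ := hhom y hy
      exact ((mem_homogeneousSubmodule _ _).mp hdh).coeff_eq_zero
        (by rw [map_zero]; omega)
    | zero => simp
    | add a b _ _ iha ihb => simp [MvPolynomial.coeff_add, iha, ihb]
    | smul a x _ ih => simp [MvPolynomial.coeff_smul, ih]
  refine ⟨κ, fun r hr => ?_⟩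
  set f : Fin κ → MvPolynomial (Fin N) ℂ := fun v => ((b v : MvPolynomial (Fin N) ℂ)) with hf
  set F : Fin κ → MvPolynomial (Fin r × Fin N) ℂ :=
    fun v => ∑ s : Fin r, rename (Prod.mk s) (f v) with hF
  have hiMap : iMap N κ r V b = aeval F := rfl
  rw [hiMap]
  -- linear independence of the f's
  have hlin : LinearIndependent ℂ f := by
    have := b.linearIndependent.map' V.subtype V.ker_subtype
    exact this
  -- nonzero combinations have a nonzero partial derivative
  have Hf : ∀ c : Fin κ → ℂ, c ≠ 0 → ∃ j, pderiv j (∑ v, c v • f v) ≠ 0 := by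
    intro c hc
    have hgV : (∑ v, c v • f v) ∈ V :=
      Submodule.sum_mem _ fun v _ => Submodule.smul_mem _ _ (b v).2
    have hg0 : (∑ v, c v • f v) ≠ 0 := by
      intro h0
      apply hc
      funext v
      exact Fintype.linearIndependent_iff.mp hlin c h0 v
    by_contra hall
    push_neg at hall
    have hsupp := support_eq_zero_of_pderiv _ hall
    obtain ⟨m, hm⟩ : ∃ m, coeff m (∑ v, c v • f v) ≠ 0 := by
      by_contra hcm
      push_neg at hcm
      exact hg0 (MvPolynomial.ext _ _ fun m => by rw [hcm m, coeff_zero])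
    have hm0 : m = 0 := hsupp m (MvPolynomial.mem_support_iff.mpr hm)
    rw [hm0] at hm
    exact hm (hcc _ hgV)
  -- injectivity
  intro P₁ P₂ hP
  by_contra hne
  have hD0 : P₁ - P₂ ≠ 0 := sub_ne_zero.mpr hne
  have hDker : aeval F (P₁ - P₂) = 0 := by rw [map_sub, hP, sub_self]
  have hex : ∃ n, ∃ P : MvPolynomial (Fin κ) ℂ, P ≠ 0 ∧ aeval F P = 0 ∧ P.totalDegree = n :=
    ⟨(P₁ - P₂).totalDegree, P₁ - P₂, hD0, hDker, rfl⟩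
  obtain ⟨P, hP0, hPker, hPdeg⟩ := Nat.find_spec hex
  -- P has a monomial with a nonzero exponent
  have hPC : ¬ ∀ m ∈ P.support, m = (0 : Fin κ →₀ ℕ) := by
    intro hall
    have hPeq : P = MvPolynomial.C (coeff 0 P) := by
      apply MvPolynomial.ext
      intro m
      by_cases hm : m = 0
      · subst hm; simp
      · have h1 : coeff m P = 0 := by
          by_contra hno
          exact hm (hall m (MvPolynomial.mem_support_iff.mpr hno))
        rw [h1, MvPolynomial.coeff_C, if_neg (Ne.symm hm)]
    have h2 : (MvPolynomial.C (MvPolynomial.coeff 0 P) :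
        MvPolynomial (Fin r × Fin N) ℂ) = 0 := by
      have h3 : aeval F (MvPolynomial.C (MvPolynomial.coeff 0 P)) = 0 := by
        rw [← hPeq]; exact hPker
      rwa [aeval_C, MvPolynomial.algebraMap_eq] at h3
    have hc0 : MvPolynomial.coeff 0 P = 0 := by
      apply MvPolynomial.C_injective (Fin r × Fin N) ℂ
      rw [h2, MvPolynomial.C_0]
    exact hP0 (by rw [hPeq, hc0, MvPolynomial.C_0])
  push_neg at hPC
  obtain ⟨m₀, hm₀supp, hm₀ne⟩ := hPC
  have htd : P.totalDegree ≠ 0 := by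
    intro h0
    have := (totalDegree_eq_zero_iff _ P).mp h0 m₀ hm₀supp
    exact hm₀ne (Finsupp.ext this)
  obtain ⟨v₀, hv₀⟩ : ∃ v₀, pderiv v₀ P ≠ 0 := by
    by_contra hall
    push_neg at hall
    exact hm₀ne (support_eq_zero_of_pderiv P hall m₀ hm₀supp)
  have hQne : aeval F (pderiv v₀ P) ≠ 0 := by
    intro h0
    have hlt : (pderiv v₀ P).totalDegree < Nat.find hex := by
      rw [← hPdeg]
      exact totalDegree_pderiv_lt P htd v₀
    exact Nat.find_min hex hlt ⟨pderiv v₀ P, hv₀, h0, rfl⟩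
  obtain ⟨w, hwQ, hwkill⟩ := main_induction hr f Hf (aeval F (pderiv v₀ P)) hQne
  have hczero : (fun v => eval w (aeval F (pderiv v P))) = (0 : Fin κ → ℂ) := by
    apply hwkill
    intro s j
    have hchain := pderiv_aeval_sum F ((s, j) : Fin r × Fin N) P
    rw [hPker, map_zero] at hchain
    have hzero : (0 : ℂ) = eval w (∑ v, aeval F (pderiv v P) * pderiv ((s, j) : Fin r × Fin N) (F v)) := by
      rw [← hchain, map_zero]
    rw [map_sum] at hzero
    have hterm : ∀ v ∈ Finset.univ,
        eval w (aeval F (pderiv v P) * pderiv ((s, j) : Fin r × Fin N) (F v))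
        = eval (fun i => w (s, i)) (pderiv j (f v)) * eval w (aeval F (pderiv v P)) := by
      intro v _
      rw [map_mul]
      have hp : pderiv ((s, j) : Fin r × Fin N) (F v) = rename (Prod.mk s) (pderiv j (f v)) := by
        rw [hF]
        exact pderiv_sum_rename (f v) (s, j)
      rw [hp, eval_rename]
      have hcomp : (w ∘ Prod.mk s) = fun i => w (s, i) := rfl
      rw [hcomp]
      ring
    rw [Finset.sum_congr rfl hterm] at hzero
    exact hzero.symm
  have hcv₀ := congrFun hczero v₀
  simp only [Pi.zero_apply] at hcv₀
  exact hwQ hcv₀
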